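/- The maximum over x ∈ [0,1]^n of min_{1≤j≤n} x_j − ∏_{j=1}^n x_j^{α_j} equals C_d = (1 − 1/d)·d^{1/(1−d)}, and this maximum is attained only at the point x = d^{1/(1−d)}·1 (1 the all-ones vector). -/

import Mathlib

lemma aux_tangent {d : ℕ} (hd2 : 2 ≤ d) {c t : ℝ} (hc : 0 < c)
    (hkey : (d : ℝ) * c ^ (d - 1) = 1) (ht : 0 ≤ t) :
    t - c ≤ t ^ d - c ^ d ∧ (t ≠ c → t - c < t ^ d - c ^ d) := by
  have hd1 : 1 < (d : ℝ) := by exact_mod_cast hd2.trans_lt' one_lt_two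
  set s : ℝ := t / c - 1 with hs
  have hs1 : -1 ≤ s := by
    have : 0 ≤ t / c := div_nonneg ht hc.le
    simp [hs]; linarith
  have h1s : 1 + s = t / c := by ring
  have hkey' : ∀ u : ℝ, 1 + (d : ℝ) * u ≤ (1 + u) ^ d → t - c ≤ t ^ d - c ^ d → True := fun _ _ _ => trivial
  -- Bernoulli strict (real exponent) applied, then converted
  have bern : s ≠ 0 → 1 + (d : ℝ) * s < (1 + s) ^ d := by
    intro hs0
    have := one_add_mul_self_lt_rpow_one_add hs1 hs0 hd1
    rwa [← Real.rpow_natCast (1 + s) d] at *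
  have bern' : 1 + (d : ℝ) * s ≤ (1 + s) ^ d := by
    rcases eq_or_ne s 0 with h | h
    · simp [h]
    · exact (bern h).le
  have hts : t = c * (1 + s) := by rw [h1s, mul_div_assoc', mul_comm, mul_div_assoc, div_self hc.ne', mul_one]
  have hpow : t ^ d = c ^ d * (1 + s) ^ d := by rw [hts, mul_pow]
  have hcd : c ^ d = c ^ (d - 1) * c := by
    rw [← pow_succ]; congr 1; omega
  have hmain : ∀ (strict : Prop), (c ^ d * (1 + (d:ℝ) * s) = c ^ d + (t - c)) := by
    intro _
    have : c ^ d * ((d:ℝ) * s) = t - c := by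
      rw [hcd]
      have : c ^ (d - 1) * c * ((d:ℝ) * s) = ((d:ℝ) * c ^ (d-1)) * (c * s) := by ring
      rw [this, hkey, one_mul, hs]
      field_simp
    linarith [this]
  have heq := hmain True
  constructor
  · have := mul_le_mul_of_nonneg_left bern' (pow_nonneg hc.le d)
    rw [heq] at this
    rw [hpow]; linarith
  · intro htc
    have hs0 : s ≠ 0 := by
      intro h0
      apply htc
      rw [hts, h0]; ring
    have := mul_lt_mul_of_pos_left (bern hs0) (pow_pos hc d)
    rw [heq] at this
    rw [hpow]; linarith

/-- The error of the overestimator `min_j x_j` over `[0,1]^n` equals `C_d`,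
attained only at `d^{1/(1-d)}·1`. -/
theorem stmt10 (n : ℕ) (hn : 1 ≤ n) (α : Fin n → ℕ) (hα : ∀ j, 1 ≤ α j)
    (d : ℕ) (hd : d = ∑ j, α j) (hd2 : 2 ≤ d) :
    IsGreatest ((fun x : Fin n → ℝ => (⨅ j, x j) - ∏ j, x j ^ α j) ''
        Set.Icc (0 : Fin n → ℝ) 1)
      ((1 - 1 / (d : ℝ)) * (d : ℝ) ^ ((1 : ℝ) / (1 - (d : ℝ)))) ∧
    ∀ x ∈ Set.Icc (0 : Fin n → ℝ) 1,
      (⨅ j, x j) - ∏ j, x j ^ α j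
          = (1 - 1 / (d : ℝ)) * (d : ℝ) ^ ((1 : ℝ) / (1 - (d : ℝ))) →
        x = fun _ => (d : ℝ) ^ ((1 : ℝ) / (1 - (d : ℝ))) := by
  have hne : Nonempty (Fin n) := Fin.pos_iff_nonempty.mp hn
  have hd1 : (1 : ℝ) < d := by exact_mod_cast hd2.trans_lt' one_lt_two
  have hd0 : (0 : ℝ) < d := by linarith
  set e : ℝ := (1 : ℝ) / (1 - (d : ℝ)) with he
  set c : ℝ := (d : ℝ) ^ e with hc
  have hc0 : 0 < c := Real.rpow_pos_of_pos hd0 e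
  have hc1 : c < 1 := by
    apply Real.rpow_lt_one_of_one_lt_of_neg hd1
    rw [he]
    apply div_neg_of_pos_of_neg one_pos
    linarith
  have hkey : (d : ℝ) * c ^ (d - 1) = 1 := by
    have h1 : c ^ (d - 1) = (d : ℝ) ^ (e * (d - 1 : ℕ)) := by
      rw [hc, ← Real.rpow_natCast ((d:ℝ)^e) (d-1), ← Real.rpow_mul hd0.le]
    have h2 : e * ((d : ℕ) - 1 : ℕ) = -1 := by
      have : ((d - 1 : ℕ) : ℝ) = (d : ℝ) - 1 := by
        have : (1:ℕ) ≤ d := by omega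
        push_cast [Nat.cast_sub this]; ring
      rw [he, this, div_mul_eq_mul_div, div_eq_iff (by intro h; rw [sub_eq_zero] at h; linarith : (1:ℝ) - (d:ℝ) ≠ 0)]
      ring
    rw [h1, h2, Real.rpow_neg_one]
    field_simp
  have hcd : c ^ d = c * (d : ℝ)⁻¹ := by
    have : c ^ d = c ^ (d - 1) * c := by rw [← pow_succ]; congr 1; omega
    have hcd1 : c ^ (d - 1) = (d : ℝ)⁻¹ := by
      field_simp at hkey ⊢
      linarith [hkey]
    rw [this, hcd1]; ring
  have hCd : c - c ^ d = (1 - 1 / (d : ℝ)) * c := by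
    rw [hcd]; field_simp
  -- upper bound for all x ∈ Icc
  have hub : ∀ x ∈ Set.Icc (0 : Fin n → ℝ) 1,
      (⨅ j, x j) - ∏ j, x j ^ α j ≤ c - c ^ d ∧
      ((⨅ j, x j) - ∏ j, x j ^ α j = c - c ^ d →
        x = fun _ => c) := by
    intro x hx
    obtain ⟨hx0, hx1⟩ := hx
    set t : ℝ := ⨅ j, x j with htdef
    have ht0 : 0 ≤ t := le_ciInf fun j => hx0 j
    have htle : ∀ j, t ≤ x j := fun j =>
      ciInf_le (Set.Finite.bddBelow (Set.finite_range x)) j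
    have hprodeq : ∏ j, (t : ℝ) ^ α j = t ^ d := by
      rw [hd, Finset.prod_pow_eq_pow_sum]
    have hprod : t ^ d ≤ ∏ j, x j ^ α j := by
      rw [← hprodeq]
      exact Finset.prod_le_prod (fun j _ => pow_nonneg ht0 _)
        (fun j _ => pow_le_pow_left₀ ht0 (htle j) _)
    obtain ⟨htan, htanstrict⟩ := aux_tangent hd2 hc0 hkey ht0
    constructor
    · linarith
    · intro heq
      have htc : t = c := by
        by_contra htc
        have := htanstrict htc
        linarith
      rw [htc] at hprodeq hprod heq
      have hprodeq2 : ∏ j, x j ^ α j = ∏ j, (c : ℝ) ^ α j := by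
        rw [hprodeq]
        exact le_antisymm (by linarith) hprod
      funext j
      by_contra hxj
      have hlt : c < x j := lt_of_le_of_ne (htc ▸ htle j) (Ne.symm hxj)
      have : ∏ k, (c : ℝ) ^ α k < ∏ k, x k ^ α k := by
        apply Finset.prod_lt_prod (fun k _ => pow_pos hc0 _)
          (fun k _ => pow_le_pow_left₀ hc0.le (htc ▸ htle k) _)
        exact ⟨j, Finset.mem_univ j, pow_lt_pow_left₀ hlt hc0.le
          (Nat.one_le_iff_ne_zero.mp (hα j))⟩
      rw [hprodeq2] at this
      exact lt_irrefl _ this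
  rw [← hCd]
  refine ⟨⟨⟨fun _ => c, ?_, ?_⟩, ?_⟩, ?_⟩
  · exact Set.mem_Icc.mpr ⟨fun j => hc0.le, fun j => hc1.le⟩
  · simp only [ciInf_const]
    rw [hd, Finset.prod_pow_eq_pow_sum, ← hd]
  · rintro y ⟨x, hx, rfl⟩
    exact (hub x hx).1
  · intro x hx heq
    exact (hub x hx).2 heq
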